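/- Fix an integer n ≥ 3 and define q : [1, n] → ℝ by q(k) = (2n)^{-k+1} k^{k+1/2}. Then log q is convex on [1,n], with (d/dk) log q(k) < 0 at k = 1 and (d/dk) log q(k) > 0 at k = n; consequently max_{1 ≤ k ≤ n} q(k) = max{ q(1), q(n) } ≤ max{ 1, n^{3/2} / 2^{n−1} }. -/

import Mathlib

open Real Set

/-- For a fixed integer `n ≥ 3` and `q(k) = (2n)^{-k+1} k^{k+1/2}` on `[1,n]`:
`log q` is convex, its derivative is negative at `1` and positive at `n`, and
`max_{[1,n]} q = max{q(1), q(n)} ≤ max{1, n^{3/2}/2^{n-1}}`. -/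
theorem stmt7 (n : ℕ) (hn : 3 ≤ n) :
    let q : ℝ → ℝ := fun k => (2 * (n : ℝ)) ^ (-k + 1) * k ^ (k + 1 / 2)
    ConvexOn ℝ (Set.Icc (1 : ℝ) n) (fun k => Real.log (q k)) ∧
    deriv (fun k => Real.log (q k)) 1 < 0 ∧
    0 < deriv (fun k => Real.log (q k)) (n : ℝ) ∧
    (∀ k ∈ Set.Icc (1 : ℝ) (n : ℝ), q k ≤ max (q 1) (q n)) ∧
    max (q 1) (q n) ≤ max 1 ((n : ℝ) ^ ((3 : ℝ) / 2) / 2 ^ (n - 1)) := by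
  intro q
  have hn0 : (0:ℝ) < n := by positivity
  have hn1 : (1:ℝ) ≤ n := by exact_mod_cast (show 1 ≤ n by omega)
  have h2n : (0:ℝ) < 2 * n := by positivity
  set L := Real.log (2 * n) with hLdef
  set f : ℝ → ℝ := fun k => (-k + 1) * L + (k + 1/2) * Real.log k with hfdef
  have hq_pos : ∀ k : ℝ, 0 < k → 0 < q k := fun k hk =>
    mul_pos (rpow_pos_of_pos h2n _) (rpow_pos_of_pos hk _)
  have hlog : ∀ k : ℝ, 0 < k → Real.log (q k) = f k := by
    intro k hk
    simp only [q, hfdef]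
    rw [Real.log_mul (ne_of_gt (rpow_pos_of_pos h2n _)) (ne_of_gt (rpow_pos_of_pos hk _)),
        Real.log_rpow h2n, Real.log_rpow hk]
  have hderiv : ∀ k : ℝ, 0 < k →
      HasDerivAt f (-L + (Real.log k + 1 + 1/(2*k))) k := by
    intro k hk
    have h1 : HasDerivAt (fun k : ℝ => (-k + 1) * L) (-L) k := by
      simpa using (((hasDerivAt_id k).neg.add_const 1).mul_const L)
    have h2 : HasDerivAt (fun k : ℝ => (k + 1/2) * Real.log k)
        (Real.log k + 1 + 1/(2*k)) k := by
      have := ((hasDerivAt_id k).add_const (1/2 : ℝ)).mul (Real.hasDerivAt_log hk.ne')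
      convert this using 1
      · rfl
      · rfl
      · rfl
      · simp only [id, one_mul]
        field_simp
        ring
    exact h1.add h2
  -- equality of log ∘ q and f near positive points
  have hev : ∀ x : ℝ, 0 < x → (fun k => Real.log (q k)) =ᶠ[nhds x] f := by
    intro x hx
    exact Filter.eventuallyEq_of_mem (Ioi_mem_nhds hx) (fun k hk => hlog k hk)
  -- derivative values
  have hd1 : deriv (fun k => Real.log (q k)) 1 = -L + 3/2 := by
    rw [(hev 1 one_pos).deriv_eq, (hderiv 1 one_pos).deriv]
    norm_num
  have hdn : deriv (fun k => Real.log (q k)) n = -L + (Real.log n + 1 + 1/(2*n)) := by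
    rw [(hev n hn0).deriv_eq, (hderiv n hn0).deriv]
  have hL_gt : (3:ℝ)/2 < L := by
    rw [hLdef, lt_log_iff_exp_lt h2n]
    have he : Real.exp 1 < 2.7182818286 := Real.exp_one_lt_d9
    have h3 : Real.exp (3/2) ^ 2 = Real.exp 1 ^ 3 := by
      rw [← Real.exp_nat_mul, ← Real.exp_nat_mul]; norm_num
    have h6 : (6:ℝ) ≤ 2 * n := by
      have : (3:ℝ) ≤ n := by exact_mod_cast hn
      linarith
    have hp : (0:ℝ) ≤ Real.exp (3/2) := (Real.exp_pos _).le
    have hc : Real.exp 1 ^ 3 < 2.7182818286 ^ 3 :=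
      pow_lt_pow_left₀ he (Real.exp_pos 1).le (by norm_num)
    have h36 : Real.exp (3/2) ^ 2 < 6 ^ 2 := by rw [h3]; nlinarith
    have := lt_of_pow_lt_pow_left₀ 2 (by norm_num : (0:ℝ) ≤ 6) h36
    linarith
  -- convexity of f on Icc 1 n
  have hconvf : ConvexOn ℝ (Icc (1:ℝ) n) f := by
    apply MonotoneOn.convexOn_of_deriv (convex_Icc _ _)
    · intro x hx
      exact ((hderiv x (lt_of_lt_of_le one_pos hx.1)).continuousAt).continuousWithinAt
    · intro x hx
      rw [interior_Icc] at hx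
      exact ((hderiv x (lt_trans one_pos hx.1)).differentiableAt).differentiableWithinAt
    · rw [interior_Icc]
      intro x hx y hy hxy
      rw [(hderiv x (lt_trans one_pos hx.1)).deriv, (hderiv y (lt_trans one_pos hy.1)).deriv]
      have hx0 : (0:ℝ) < x := lt_trans one_pos hx.1
      have hy0 : (0:ℝ) < y := lt_trans one_pos hy.1
      have hlog_ge : (y - x)/y ≤ Real.log y - Real.log x := by
        have h := Real.log_le_sub_one_of_pos (show (0:ℝ) < x/y by positivity)
        rw [Real.log_div hx0.ne' hy0.ne'] at h
        have : x/y - 1 = -((y-x)/y) := by field_simp; ring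
        linarith [h, this ▸ h]
      have h1x : (1:ℝ) ≤ x := le_of_lt hx.1
      have heq : 1/(2*x) - 1/(2*y) = (y-x)/(2*x*y) := by field_simp
      have hstep : (y-x)/(2*x*y) ≤ (y-x)/y := by
        rw [div_le_div_iff₀ (by positivity) (by positivity)]
        have h2xy : y ≤ 2*x*y := by nlinarith
        nlinarith [mul_le_mul_of_nonneg_left h2xy (sub_nonneg.mpr hxy)]
      linarith
  have hconv : ConvexOn ℝ (Icc (1:ℝ) (n:ℝ)) (fun k => Real.log (q k)) := by
    refine ⟨hconvf.1, fun x hx y hy a b ha hb hab => ?_⟩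
    have hx0 : (0:ℝ) < x := lt_of_lt_of_le one_pos hx.1
    have hy0 : (0:ℝ) < y := lt_of_lt_of_le one_pos hy.1
    have hz : a • x + b • y ∈ Icc (1:ℝ) (n:ℝ) := hconvf.1 hx hy ha hb hab
    have hz0 : (0:ℝ) < a • x + b • y := lt_of_lt_of_le one_pos hz.1
    simp only [hlog _ hx0, hlog _ hy0, hlog _ hz0]
    exact hconvf.2 hx hy ha hb hab
  refine ⟨hconv, ?_, ?_, ?_, ?_⟩
  · rw [hd1]; linarith
  · rw [hdn, hLdef, Real.log_mul two_ne_zero hn0.ne']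
    have hl2 : Real.log 2 < 0.6931471808 := Real.log_two_lt_d9
    have : (0:ℝ) < 1/(2*n) := by positivity
    linarith
  · intro k hk
    have hk0 : (0:ℝ) < k := lt_of_lt_of_le one_pos hk.1
    have hmem : k ∈ segment ℝ (1:ℝ) (n:ℝ) := by rwa [segment_eq_Icc hn1]
    have h := hconv.le_on_segment (left_mem_Icc.mpr hn1) (right_mem_Icc.mpr hn1) hmem
    rcases le_total (q 1) (q n) with hle | hle
    · rw [max_eq_right hle] at *
      rw [max_eq_right (Real.log_le_log (hq_pos 1 one_pos) hle)] at h
      exact (Real.log_le_log_iff (hq_pos k hk0) (hq_pos n hn0)).mp h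
    · rw [max_eq_left hle] at *
      rw [max_eq_left (Real.log_le_log (hq_pos n hn0) hle)] at h
      exact (Real.log_le_log_iff (hq_pos k hk0) (hq_pos 1 one_pos)).mp h
  · have hq1 : q 1 = 1 := by
      simp only [q]
      norm_num
    have hcast : ((n:ℝ) - 1) = ((n - 1 : ℕ) : ℝ) := by
      rw [Nat.cast_sub (by omega)]; norm_num
    have hqn : q n = (n:ℝ) ^ ((3:ℝ)/2) / 2 ^ (n - 1) := by
      simp only [q]
      have e1 : (2 * (n:ℝ)) ^ (-(n:ℝ) + 1) = ((2:ℝ) ^ ((n:ℝ)-1) * (n:ℝ) ^ ((n:ℝ)-1))⁻¹ := by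
        rw [show (-(n:ℝ) + 1) = -((n:ℝ)-1) by ring, Real.rpow_neg h2n.le,
          Real.mul_rpow (by norm_num) hn0.le]
      have e2 : (n:ℝ) ^ ((n:ℝ) + 1/2) = (n:ℝ) ^ ((n:ℝ)-1) * (n:ℝ) ^ ((3:ℝ)/2) := by
        rw [show ((n:ℝ) + 1/2) = ((n:ℝ)-1) + 3/2 by ring, Real.rpow_add hn0]
      rw [e1, e2, hcast, Real.rpow_natCast, Real.rpow_natCast]
      have hA : ((n:ℝ)) ^ (n-1) ≠ 0 := by positivity
      have hB : ((2:ℝ)) ^ (n-1) ≠ 0 := by positivity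
      field_simp
    rw [hq1, hqn]
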